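/- arXiv:0904.0518 — 8 statements merged into one kernel-verified Lean document; each statement's English description precedes it below -/
import Mathlib

section
/- Let A be a unital C*-algebra and let a ∈ A. Then the 2×2 matrix [[|a*|, a], [a*, |a|]] is a positive element of the C*-algebra M₂(A) of 2×2 matrices over A. -/
lemma aux_sq {B : Type*} [CStarAlgebra B] [PartialOrder B] [StarOrderedRing B]
    (x : B) (hx : IsSelfAdjoint x) : 0 ≤ x + CFC.sqrt (x * x) := by
  have habs : CFC.sqrt (x * x) = cfc (fun t : ℝ => |t|) x := by
    have hmul : cfc (fun t : ℝ => |t|) x * cfc (fun t : ℝ => |t|) x = x * x := by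
      rw [← cfc_mul ..]
      conv_rhs => rw [← cfc_id ℝ x, ← cfc_mul ..]
      exact cfc_congr fun t _ => abs_mul_abs_self t
    have hpos : (0 : B) ≤ cfc (fun t : ℝ => |t|) x := cfc_nonneg fun t _ => abs_nonneg t
    exact CFC.sqrt_unique hmul hpos
  rw [habs]
  nth_rw 1 [← cfc_id ℝ x]
  rw [← cfc_add ..]
  exact cfc_nonneg fun t _ => by simp only [id]; linarith [neg_abs_le t]

/-- Let `A` be a unital C*-algebra and `a ∈ A`. Then the 2×2 matrix
`[[|a*|, a], [a*, |a|]]` is a positive element of the C*-algebra `M₂(A)`.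

Here `|a| = √(a* a)` and `|a*| = √(a a*)` (continuous functional calculus square roots).
Since Mathlib does not endow `Matrix (Fin 2) (Fin 2) A` with its (unique) C*-algebra
structure, we express the positive cone of the C*-algebra `M₂(A)` via an arbitrary
C*-algebra `B` that is ⋆-isomorphic to `M₂(A)`. -/
theorem stmt0 {A B : Type*} [CStarAlgebra A] [PartialOrder A] [StarOrderedRing A]
    [CStarAlgebra B] [PartialOrder B] [StarOrderedRing B]
    (Φ : Matrix (Fin 2) (Fin 2) A ≃⋆ₐ[ℂ] B) (a : A) :
    0 ≤ Φ !![CFC.sqrt (a * star a), a; star a, CFC.sqrt (star a * a)] := by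
  set s : A := CFC.sqrt (a * star a) with hs
  set t : A := CFC.sqrt (star a * a) with ht
  have hs2 : s * s = a * star a := CFC.sqrt_mul_sqrt_self _ (mul_star_self_nonneg a)
  have ht2 : t * t = star a * a := CFC.sqrt_mul_sqrt_self _ (star_mul_self_nonneg a)
  set s' : A := CFC.sqrt s with hs'
  set t' : A := CFC.sqrt t with ht'
  have hs'2 : s' * s' = s := CFC.sqrt_mul_sqrt_self _ (CFC.sqrt_nonneg _)
  have ht'2 : t' * t' = t := CFC.sqrt_mul_sqrt_self _ (CFC.sqrt_nonneg _)
  have hs'sa : star s' = s' := (IsSelfAdjoint.of_nonneg (CFC.sqrt_nonneg _)).star_eq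
  have ht'sa : star t' = t' := (IsSelfAdjoint.of_nonneg (CFC.sqrt_nonneg _)).star_eq
  set N : B := Φ !![0, a; star a, 0] with hN
  set D : B := Φ !![s, 0; 0, t] with hD
  -- matrix identities in A
  have mN : (!![0, a; star a, 0] : Matrix (Fin 2) (Fin 2) A) * !![0, a; star a, 0]
      = !![a * star a, 0; 0, star a * a] := by
    rw [Matrix.mul_fin_two]; simp
  have mD : (!![s, 0; 0, t] : Matrix (Fin 2) (Fin 2) A) * !![s, 0; 0, t]
      = !![a * star a, 0; 0, star a * a] := by
    rw [Matrix.mul_fin_two]; simp [hs2, ht2]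
  have mD' : (!![s', 0; 0, t'] : Matrix (Fin 2) (Fin 2) A) * !![s', 0; 0, t']
      = !![s, 0; 0, t] := by
    rw [Matrix.mul_fin_two]; simp [hs'2, ht'2]
  have starN : star (!![0, a; star a, 0] : Matrix (Fin 2) (Fin 2) A) = !![0, a; star a, 0] := by
    rw [Matrix.star_eq_conjTranspose, Matrix.eta_fin_two (Matrix.conjTranspose _)]
    simp
  have starD' : star (!![s', 0; 0, t'] : Matrix (Fin 2) (Fin 2) A) = !![s', 0; 0, t'] := by
    rw [Matrix.star_eq_conjTranspose, Matrix.eta_fin_two (Matrix.conjTranspose _)]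
    simp [hs'sa, ht'sa]
  have hNsa : IsSelfAdjoint N := by
    rw [hN, IsSelfAdjoint, ← map_star, starN]
  have hDD : D * D = N * N := by
    rw [hD, hN, ← map_mul Φ, ← map_mul Φ, mD, mN]
  have hDpos : 0 ≤ D := by
    have : D = star (Φ !![s', 0; 0, t']) * Φ !![s', 0; 0, t'] := by
      rw [← map_star, starD', ← map_mul Φ, mD', hD]
    rw [this]
    exact star_mul_self_nonneg _
  have hsqrt : CFC.sqrt (N * N) = D := CFC.sqrt_unique hDD hDpos
  have msum : (!![0, a; star a, 0] : Matrix (Fin 2) (Fin 2) A) + !![s, 0; 0, t]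
      = !![s, a; star a, t] := by
    rw [Matrix.eta_fin_two (_ + _)]
    simp
  have hsum : Φ !![s, a; star a, t] = N + D := by
    rw [hN, hD, ← map_add, msum]
  rw [hsum, ← hsqrt]
  exact aux_sq N hNsa
end

section
/- Let n ∈ ℕ and let a be an n×n complex matrix. Then the 2n×2n block matrix fromBlocks(√(a aᴴ), a, aᴴ, √(aᴴ a)) — i.e. the block matrix with (1,1)-block √(a aᴴ), (1,2)-block a, (2,1)-block aᴴ and (2,2)-block √(aᴴ a) — is positive semidefinite. -/
open scoped ComplexOrder in
/-- The positive semidefinite square root of a positive semidefinite matrix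
(the definition of `Matrix.PosSemidef.sqrt` in Mathlib of December 2024, since removed). -/
noncomputable def Matrix.PosSemidef.sqrt {n : Type*} [Fintype n] [DecidableEq n] {𝕜 : Type*}
    [RCLike 𝕜] {A : Matrix n n 𝕜} (hA : A.PosSemidef) : Matrix n n 𝕜 :=
  hA.1.eigenvectorUnitary.1 * Matrix.diagonal ((↑) ∘ (√·) ∘ hA.1.eigenvalues) *
  (star hA.1.eigenvectorUnitary : Matrix n n 𝕜)

open scoped MatrixOrder ComplexOrder in
lemma Matrix.PosSemidef.sqrt_eq_cfcSqrt {n : Type*} [Fintype n] [DecidableEq n]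
    {A : Matrix n n ℂ} (hA : A.PosSemidef) : hA.sqrt = CFC.sqrt A := by
  rw [CFC.sqrt_eq_cfc, cfc_nnreal_eq_real _ A hA.nonneg, hA.1.cfc_eq]
  simp only [Matrix.IsHermitian.cfc, Matrix.PosSemidef.sqrt]
  congr 3
  funext i
  simp only [Function.comp_apply, Real.coe_sqrt, Real.coe_toNNReal _ (hA.eigenvalues_nonneg i)]

open scoped MatrixOrder ComplexOrder in
lemma Matrix.PosSemidef.posSemidef_sqrt {n : Type*} [Fintype n] [DecidableEq n]
    {A : Matrix n n ℂ} (hA : A.PosSemidef) : hA.sqrt.PosSemidef := by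
  rw [hA.sqrt_eq_cfcSqrt]
  exact Matrix.nonneg_iff_posSemidef.mp (CFC.sqrt_nonneg A)

open scoped MatrixOrder ComplexOrder in
lemma Matrix.PosSemidef.sqrt_mul_self {n : Type*} [Fintype n] [DecidableEq n]
    {A : Matrix n n ℂ} (hA : A.PosSemidef) : hA.sqrt * hA.sqrt = A := by
  rw [hA.sqrt_eq_cfcSqrt]
  exact CFC.sqrt_mul_sqrt_self A hA.nonneg

open scoped MatrixOrder ComplexOrder in
lemma Matrix.PosSemidef.eq_sqrt_of_sq_eq {n : Type*} [Fintype n] [DecidableEq n]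
    {A : Matrix n n ℂ} (hA : A.PosSemidef) (B : Matrix n n ℂ) (hB : B.PosSemidef)
    (hAB : A ^ 2 = B) : A = hB.sqrt := by
  rw [hB.sqrt_eq_cfcSqrt]
  exact (CFC.sqrt_unique (by rw [← hAB, sq]) hA.nonneg).symm

open Matrix ComplexOrder

section aux
variable {m l : Type*} [Fintype m] [DecidableEq m] [Fintype l] [DecidableEq l]

omit [DecidableEq m] [DecidableEq l] in
lemma posSemidef_fromBlocks_diag {A : Matrix m m ℂ} {D : Matrix l l ℂ}
    (hA : A.PosSemidef) (hD : D.PosSemidef) :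
    (fromBlocks A 0 0 D).PosSemidef := by
  refine PosSemidef.of_dotProduct_mulVec_nonneg ?_ ?_
  · unfold IsHermitian
    simp [fromBlocks_conjTranspose, hA.1.eq, hD.1.eq]
  · intro x
    have h1 := hA.dotProduct_mulVec_nonneg (x ∘ Sum.inl)
    have h2 := hD.dotProduct_mulVec_nonneg (x ∘ Sum.inr)
    have : star x ⬝ᵥ (fromBlocks A 0 0 D *ᵥ x)
        = star (x ∘ Sum.inl) ⬝ᵥ (A *ᵥ (x ∘ Sum.inl))
          + star (x ∘ Sum.inr) ⬝ᵥ (D *ᵥ (x ∘ Sum.inr)) := by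
      rw [fromBlocks_mulVec]
      simp [dotProduct, Fintype.sum_sum_type, Pi.star_apply, mul_add]
    rw [this]
    exact add_nonneg h1 h2

lemma sqrt_sq_add_self_posSemidef {T : Matrix m m ℂ}
    (hT : T.IsHermitian) (h2 : (T * T).PosSemidef) :
    (h2.sqrt + T).PosSemidef := by
  set U : Matrix m m ℂ := (hT.eigenvectorUnitary : Matrix m m ℂ) with hUdef
  have hU : U * star U = 1 := (Matrix.mem_unitaryGroup_iff).mp hT.eigenvectorUnitary.2
  have hU' : star U * U = 1 := (Matrix.mem_unitaryGroup_iff').mp hT.eigenvectorUnitary.2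
  set d : m → ℝ := hT.eigenvalues with hddef
  have hspec : T = U * diagonal ((↑) ∘ d) * star U := hT.spectral_theorem
  have conj_mul : ∀ (e f : m → ℂ), (U * diagonal e * star U) * (U * diagonal f * star U)
      = U * diagonal (e * f) * star U := by
    intro e f
    simp only [← Matrix.mul_assoc]
    rw [Matrix.mul_assoc (U * diagonal e) (star U) U, hU', mul_one,
      Matrix.mul_assoc U (diagonal e) (diagonal f), diagonal_mul_diagonal]
    rfl
  set S : Matrix m m ℂ := U * diagonal ((↑) ∘ fun i => |d i|) * star U with hSdef
  have hS : S.PosSemidef := by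
    apply PosSemidef.mul_mul_conjTranspose_same ?_ U
    · exact posSemidef_diagonal_iff.mpr fun i => by
        simp only [Function.comp_apply]
        exact Complex.zero_le_real.mpr (abs_nonneg _)
  have habs : (Complex.ofReal ∘ fun i => |d i|) * (Complex.ofReal ∘ fun i => |d i|)
      = (Complex.ofReal ∘ d) * (Complex.ofReal ∘ d) := by
    funext i
    simp only [Pi.mul_apply, Function.comp_apply, ← Complex.ofReal_mul, abs_mul_abs_self]
  have key : S = h2.sqrt := by
    apply hS.eq_sqrt_of_sq_eq
    rw [pow_two, hSdef, conj_mul, habs]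
    conv_rhs => rw [hspec, conj_mul]
  have : h2.sqrt + T = U * diagonal ((↑) ∘ fun i => |d i| + d i) * star U := by
    have hfun : (fun i => (Complex.ofReal ∘ fun i => |d i|) i + (Complex.ofReal ∘ d) i)
        = Complex.ofReal ∘ (fun i => |d i| + d i) := by
      funext i; simp
    rw [← key, hSdef, hspec, ← add_mul, ← mul_add, diagonal_add, hfun]
  rw [this]
  apply PosSemidef.mul_mul_conjTranspose_same ?_ U
  exact posSemidef_diagonal_iff.mpr fun i => by
    simp only [Function.comp_apply]
    exact Complex.zero_le_real.mpr (by linarith [neg_abs_le (d i)])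

end aux

open Matrix ComplexOrder in
/-- For an `n × n` complex matrix `a`, the `2n × 2n` block matrix
`fromBlocks (√(a aᴴ)) a aᴴ (√(aᴴ a))` is positive semidefinite. -/
theorem stmt1 (n : ℕ) (a : Matrix (Fin n) (Fin n) ℂ) :
    (Matrix.fromBlocks (Matrix.posSemidef_self_mul_conjTranspose a).sqrt a
      aᴴ (Matrix.posSemidef_conjTranspose_mul_self a).sqrt).PosSemidef := by
  set T : Matrix (Fin n ⊕ Fin n) (Fin n ⊕ Fin n) ℂ := fromBlocks 0 a aᴴ 0 with hTdef
  have hT : T.IsHermitian := by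
    unfold IsHermitian
    simp [hTdef, fromBlocks_conjTranspose]
  have h2 : (T * T).PosSemidef := by
    have := posSemidef_conjTranspose_mul_self T
    rwa [hT.eq] at this
  have hTT : T * T = fromBlocks (a * aᴴ) 0 0 (aᴴ * a) := by
    simp [hTdef, fromBlocks_multiply]
  have hsq : h2.sqrt = fromBlocks (Matrix.posSemidef_self_mul_conjTranspose a).sqrt 0
      0 (Matrix.posSemidef_conjTranspose_mul_self a).sqrt := by
    symm
    apply PosSemidef.eq_sqrt_of_sq_eq
    · exact posSemidef_fromBlocks_diag (posSemidef_self_mul_conjTranspose a).posSemidef_sqrt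
        (posSemidef_conjTranspose_mul_self a).posSemidef_sqrt
    · rw [pow_two, fromBlocks_multiply, hTT]
      simp [PosSemidef.sqrt_mul_self]
  have := sqrt_sq_add_self_posSemidef hT h2
  rw [hsq, hTdef, fromBlocks_add] at this
  simpa using this
end

section
/- Let A be a unital C*-algebra, let a ∈ A, and let n ≥ 1 be a natural number. Then a* · |a*|^{n-1} · a = |a|^{n+1}. -/
open scoped NNReal

/-- In a unital C*-algebra `A`, for every `a ∈ A` and every natural
number `n ≥ 1`, one has `a* · |a*|^(n-1) · a = |a|^(n+1)`, where `|a| = √(a* a)` and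
`|a*| = √(a a*)` are given by the continuous functional calculus. -/
theorem stmt3 {A : Type*} [CStarAlgebra A] [PartialOrder A] [StarOrderedRing A]
    (a : A) (n : ℕ) (hn : 1 ≤ n) :
    star a * CFC.sqrt (a * star a) ^ (n - 1) * a = CFC.sqrt (star a * a) ^ (n + 1) := by
  have hb : (0 : A) ≤ star a * a := star_mul_self_nonneg a
  have hc : (0 : A) ≤ a * star a := mul_star_self_nonneg a
  set s := CFC.sqrt (a * star a) ^ (n - 1) with hs
  have hsnn : 0 ≤ s := CStarAlgebra.pow_nonneg (CFC.sqrt_nonneg _) _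
  have hcomm : Commute (CFC.sqrt (a * star a)) (a * star a) := by
    conv_rhs => rw [← cfcₙ_id ℝ≥0 (a * star a)]
    exact cfcₙ_commute_cfcₙ _ _ _
  have hscomm : Commute s (a * star a) := hcomm.pow_left _
  have key : ∀ k : ℕ, a * (star a * a) ^ k = (a * star a) ^ k * a := by
    intro k
    induction k with
    | zero => simp
    | succ k ih =>
      rw [pow_succ, ← mul_assoc, ih, pow_succ]
      simp only [mul_assoc]
  have hss : s * s = (a * star a) ^ (n - 1) := by
    rw [hs, ← pow_add, ← two_mul, pow_mul, CFC.sq_sqrt (a * star a)]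
  have hL2 : (star a * s * a) * (star a * s * a) = (star a * a) ^ (n + 1) := by
    have h1 : s * (a * star a) * s = (a * star a) ^ n := by
      rw [hscomm.eq, mul_assoc, hss, ← pow_succ', Nat.sub_add_cancel hn]
    calc (star a * s * a) * (star a * s * a)
        = star a * (s * (a * star a) * s) * a := by simp only [mul_assoc]
      _ = star a * (a * star a) ^ n * a := by rw [h1]
      _ = star a * (a * (star a * a) ^ n) := by rw [key n, mul_assoc]
      _ = (star a * a) ^ (n + 1) := by rw [← mul_assoc, ← pow_succ']
  have h1 : CFC.sqrt ((star a * a) ^ (n + 1)) = star a * s * a :=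
    CFC.sqrt_unique hL2 (star_left_conjugate_nonneg hsnn a)
  have h2 : CFC.sqrt ((star a * a) ^ (n + 1)) = CFC.sqrt (star a * a) ^ (n + 1) :=
    CFC.sqrt_unique (by rw [← pow_add, ← two_mul, pow_mul, CFC.sq_sqrt (star a * a)])
      (CStarAlgebra.pow_nonneg (CFC.sqrt_nonneg _) _)
  exact h1.symm.trans h2
end

section
/- Let A be a unital C*-algebra, let a ∈ A, and let n ≥ 1 be a natural number. Then in M₂(A) one has the identity ([[|a*|, a], [a*, |a|]])^n = 2^{n-1} · [[|a*|^n, |a*|^{n-1} a], [a* |a*|^{n-1}, |a|^n]]. -/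
open scoped NNReal

lemma intertwine {A : Type*} [CStarAlgebra A] [PartialOrder A] [StarOrderedRing A]
    (a b c : A) (hb : IsSelfAdjoint b) (hc : IsSelfAdjoint c)
    (hab : a * b = c * a) (f : ℝ → ℝ) (hf : Continuous f) :
    a * cfc f b = cfc f c * a := by
  classical
  have hpow : ∀ k : ℕ, a * b ^ k = c ^ k * a := by
    intro k
    induction k with
    | zero => simp
    | succ k ih =>
      rw [pow_succ, ← mul_assoc, ih, mul_assoc, hab, pow_succ, mul_assoc]
  have haeval : ∀ p : Polynomial ℝ, a * Polynomial.aeval b p = Polynomial.aeval c p * a := by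
    intro p
    induction p using Polynomial.induction_on' with
    | add p q hp hq => simp [mul_add, add_mul, hp, hq]
    | monomial k r =>
      simp only [Polynomial.aeval_monomial]
      rw [← mul_assoc, ← Algebra.commutes r a, mul_assoc, hpow, ← mul_assoc]
  set K : Set ℝ := spectrum ℝ b ∪ spectrum ℝ c with hK
  have hKc : IsCompact K := (spectrum.isCompact b).union (spectrum.isCompact c)
  haveI : CompactSpace K := isCompact_iff_compactSpace.mp hKc
  have hb' : spectrum ℝ b ⊆ K := Set.subset_union_left
  have hc' : spectrum ℝ c ⊆ K := Set.subset_union_right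
  let ιb : C(spectrum ℝ b, K) := ⟨Set.inclusion hb', continuous_inclusion hb'⟩
  let ιc : C(spectrum ℝ c, K) := ⟨Set.inclusion hc', continuous_inclusion hc'⟩
  let Φ : C(K, ℝ) → A := fun g => a * cfcHom hb (g.comp ιb)
  let Ψ : C(K, ℝ) → A := fun g => cfcHom hc (g.comp ιc) * a
  have hΦ : Continuous Φ :=
    (continuous_mul_left a).comp ((cfcHom_continuous hb).comp (ContinuousMap.continuous_precomp ιb))
  have hΨ : Continuous Ψ :=
    (continuous_mul_right a).comp ((cfcHom_continuous hc).comp (ContinuousMap.continuous_precomp ιc))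
  have hS : IsClosed {g : C(K, ℝ) | Φ g = Ψ g} := isClosed_eq hΦ hΨ
  have hpolyhom : ∀ (d : A) (hd : IsSelfAdjoint d) (hsub : spectrum ℝ d ⊆ K)
      (ι : C(spectrum ℝ d, K)) (hι : ∀ x, (ι x : ℝ) = x) (p : Polynomial ℝ),
      cfcHom hd ((p.toContinuousMapOn K).comp ι) = Polynomial.aeval d p := by
    intro d hd hsub ι hι p
    have h1 : (p.toContinuousMapOn K).comp ι = p.toContinuousMapOn (spectrum ℝ d) := by
      ext x
      simp [Polynomial.toContinuousMapOn, Polynomial.toContinuousMap, hι]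
    rw [h1, ← cfc_polynomial p d hd,
      cfc_apply (fun x : ℝ => p.eval x) d hd (Polynomial.continuous_aeval p).continuousOn]
    congr
  have hpoly : (polynomialFunctions K : Set C(K, ℝ)) ⊆ {g | Φ g = Ψ g} := by
    rw [polynomialFunctions_coe]
    rintro _ ⟨p, rfl⟩
    show a * cfcHom hb _ = cfcHom hc _ * a
    simp only [Polynomial.toContinuousMapOnAlgHom_apply]
    rw [hpolyhom b hb hb' ιb (fun x => rfl) p, hpolyhom c hc hc' ιc (fun x => rfl) p]
    exact haeval p
  have hdense : closure (polynomialFunctions K : Set C(K, ℝ)) = Set.univ := by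
    have h := polynomialFunctions.topologicalClosure K
    rw [← Subalgebra.topologicalClosure_coe, h]
    rfl
  have hall : ∀ g : C(K, ℝ), Φ g = Ψ g := by
    intro g
    have : g ∈ closure (polynomialFunctions K : Set C(K, ℝ)) := by rw [hdense]; trivial
    exact hS.closure_subset_iff.mpr hpoly this
  let g : C(K, ℝ) := ⟨fun x => f x, hf.comp continuous_subtype_val⟩
  have hgb : g.comp ιb = ⟨(spectrum ℝ b).restrict f, hf.continuousOn.restrict⟩ := by ext x; rfl
  have hgc : g.comp ιc = ⟨(spectrum ℝ c).restrict f, hf.continuousOn.restrict⟩ := by ext x; rfl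
  have := hall g
  simp only [Φ, Ψ, hgb, hgc] at this
  rwa [cfc_apply f b hb hf.continuousOn, cfc_apply f c hc hf.continuousOn]

lemma sqrt_intertwine {A : Type*} [CStarAlgebra A] [PartialOrder A] [StarOrderedRing A]
    (a : A) : a * CFC.sqrt (star a * a) = CFC.sqrt (a * star a) * a := by
  have hb : (0 : A) ≤ star a * a := star_mul_self_nonneg a
  have hc : (0 : A) ≤ a * star a := mul_star_self_nonneg a
  have hf : Continuous (fun x : ℝ => (NNReal.sqrt x.toNNReal : ℝ)) :=
    NNReal.continuous_coe.comp (NNReal.continuous_sqrt.comp continuous_real_toNNReal)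
  rw [CFC.sqrt_eq_cfc (a := star a * a), CFC.sqrt_eq_cfc (a := a * star a),
    cfc_nnreal_eq_real NNReal.sqrt _ hb, cfc_nnreal_eq_real NNReal.sqrt _ hc]
  exact intertwine a _ _ (IsSelfAdjoint.of_nonneg hb) (IsSelfAdjoint.of_nonneg hc)
    (mul_assoc a (star a) a).symm _ hf

lemma pow_intertwine {A : Type*} [CStarAlgebra A] [PartialOrder A] [StarOrderedRing A]
    (a : A) (k : ℕ) :
    a * CFC.sqrt (star a * a) ^ k = CFC.sqrt (a * star a) ^ k * a := by
  induction k with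
  | zero => simp
  | succ k ih => rw [pow_succ, ← mul_assoc, ih, mul_assoc, sqrt_intertwine, pow_succ, mul_assoc]

lemma pow_intertwine_star {A : Type*} [CStarAlgebra A] [PartialOrder A] [StarOrderedRing A]
    (a : A) (k : ℕ) :
    star a * CFC.sqrt (a * star a) ^ k = CFC.sqrt (star a * a) ^ k * star a := by
  have := congrArg star (pow_intertwine a k)
  simp only [star_mul, star_pow] at this
  rw [(IsSelfAdjoint.of_nonneg (CFC.sqrt_nonneg _) : IsSelfAdjoint (CFC.sqrt (star a * a))).star_eq,
    (IsSelfAdjoint.of_nonneg (CFC.sqrt_nonneg _) : IsSelfAdjoint (CFC.sqrt (a * star a))).star_eq]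
      at this
  exact this.symm

lemma key {A : Type*} [CStarAlgebra A] [PartialOrder A] [StarOrderedRing A]
    (a : A) (m : ℕ) :
    (!![CFC.sqrt (a * star a), a; star a, CFC.sqrt (star a * a)] :
        Matrix (Fin 2) (Fin 2) A) ^ (m + 1)
      = 2 ^ m •
          !![CFC.sqrt (a * star a) ^ (m + 1), CFC.sqrt (a * star a) ^ m * a;
             star a * CFC.sqrt (a * star a) ^ m, CFC.sqrt (star a * a) ^ (m + 1)] := by
  set p := CFC.sqrt (a * star a)
  set q := CFC.sqrt (star a * a)
  have hp2 : p * p = a * star a := CFC.sqrt_mul_sqrt_self _ (mul_star_self_nonneg a)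
  have hq2 : q * q = star a * a := CFC.sqrt_mul_sqrt_self _ (star_mul_self_nonneg a)
  have haq : a * q = p * a := sqrt_intertwine a
  have hstar : ∀ k, star a * p ^ k = q ^ k * star a := pow_intertwine_star a
  induction m with
  | zero => simp
  | succ m ih =>
    rw [pow_succ, ih, smul_mul_assoc, Matrix.mul_fin_two, pow_succ 2 m, mul_smul]
    refine congrArg (2 ^ m • ·) ?_
    have e11 : p ^ (m + 1) * p + p ^ m * a * star a = 2 • (p ^ (m + 1 + 1)) := by
      rw [two_smul, ← pow_succ]
      congr 1
      rw [mul_assoc, ← hp2, ← mul_assoc, ← pow_succ, ← pow_succ]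
    have e12 : p ^ (m + 1) * a + p ^ m * a * q = 2 • (p ^ (m + 1) * a) := by
      rw [two_smul, mul_assoc (p ^ m) a q, haq, ← mul_assoc, ← pow_succ]
    have e21 : star a * p ^ m * p + q ^ (m + 1) * star a = 2 • (star a * p ^ (m + 1)) := by
      rw [two_smul, mul_assoc, ← pow_succ, ← hstar (m + 1)]
    have e22 : star a * p ^ m * a + q ^ (m + 1) * q = 2 • (q ^ (m + 1 + 1)) := by
      rw [two_smul, hstar m, mul_assoc, ← hq2, ← mul_assoc, ← pow_succ, ← pow_succ]
    rw [e11, e12, e21, e22]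
    ext i j
    fin_cases i <;> fin_cases j <;> simp



/-- Let `A` be a unital C*-algebra, `a ∈ A`, and `n ≥ 1`. Then in
`M₂(A)` one has
`([[|a*|, a], [a*, |a|]])^n = 2^(n-1) • [[|a*|^n, |a*|^(n-1) a], [a* |a*|^(n-1), |a|^n]]`,
where `|a| = √(a* a)` and `|a*| = √(a a*)` are given by the continuous functional
calculus. -/
theorem stmt5 {A : Type*} [CStarAlgebra A] [PartialOrder A] [StarOrderedRing A]
    (a : A) (n : ℕ) (hn : 1 ≤ n) :
    (!![CFC.sqrt (a * star a), a; star a, CFC.sqrt (star a * a)] :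
        Matrix (Fin 2) (Fin 2) A) ^ n
      = 2 ^ (n - 1) •
          !![CFC.sqrt (a * star a) ^ n, CFC.sqrt (a * star a) ^ (n - 1) * a;
             star a * CFC.sqrt (a * star a) ^ (n - 1), CFC.sqrt (star a * a) ^ n] := by
  obtain ⟨m, rfl⟩ : ∃ m, n = m + 1 := ⟨n - 1, (Nat.succ_pred_eq_of_pos hn).symm⟩
  simpa using key a m
end

section
/- Let A be a unital C*-algebra and let a, v ∈ A satisfy a = v · |a| and v* v · |a| = |a|. Then for every continuous function f : ℝ → ℝ with f(0) = 0, applying f via continuous functional calculus to the positive element (1/2) · [[|a*|, a], [a*, |a|]] of M₂(A) yields f((1/2) · [[|a*|, a], [a*, |a|]]) = (1/2) · [[f(|a*|), f(|a*|) v], [v* f(|a*|), f(|a|)]]. -/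
set_option maxHeartbeats 1000000

open scoped ContinuousMapZero

section Lemmas
variable {B : Type*} [CStarAlgebra B] [PartialOrder B] [StarOrderedRing B]

/-- If `d * p = 0` for `0 ≤ p`, then `d * √p = 0`. -/
lemma mul_cfcSqrt_eq_zero (d p : B) (hp : 0 ≤ p) (h : d * p = 0) :
    d * CFC.sqrt p = 0 := by
  set s := CFC.sqrt p with hs_def
  have hs : s * s = p := CFC.sqrt_mul_sqrt_self p hp
  have hssa : IsSelfAdjoint s := IsSelfAdjoint.of_nonneg (CFC.sqrt_nonneg p)
  have key : (d * s) * star (d * s) = 0 := by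
    rw [star_mul, hssa.star_eq]
    calc d * s * (s * star d) = d * (s * s) * star d := by
          rw [mul_assoc, ← mul_assoc s s, ← mul_assoc]
    _ = 0 := by rw [hs, h, zero_mul]
  have : ‖d * s‖ * ‖d * s‖ = 0 := by
    rw [← CStarRing.norm_self_mul_star, key, norm_zero]
  have : ‖d * s‖ = 0 := by nlinarith [norm_nonneg (d * s)]
  exact norm_eq_zero.mp this

/-- If `d * p = 0`, then `d` annihilates everything in the image of `cfcₙHom` at `p`. -/
lemma mul_cfcₙHom_eq_zero (d p : B) (hsa : IsSelfAdjoint p) (h : d * p = 0)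
    (g : C(quasispectrum ℝ p, ℝ)₀) : d * cfcₙHom hsa g = 0 := by
  let φ := cfcₙHom (R := ℝ) hsa
  have hφc : Continuous φ := (cfcₙHom_isClosedEmbedding hsa).continuous
  have hcl : IsClosed {g : C(quasispectrum ℝ p, ℝ)₀ | d * φ g = 0} :=
    isClosed_eq (by fun_prop) continuous_const
  have hdense := ContinuousMapZero.adjoin_id_dense (quasispectrum ℝ p)
  have hmem : ∀ g ∈ NonUnitalStarAlgebra.adjoin ℝ
      {(ContinuousMapZero.id (quasispectrum ℝ p) : C(quasispectrum ℝ p, ℝ)₀)}, d * φ g = 0 := by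
    intro g hg
    induction hg using NonUnitalStarAlgebra.adjoin_induction with
    | mem x hx =>
      simp only [Set.mem_singleton_iff] at hx
      subst hx
      have hid : φ (ContinuousMapZero.id (quasispectrum ℝ p)) = p := cfcₙHom_id hsa
      show d * φ _ = 0
      rw [hid, h]
    | add x y _ _ hx hy => show d * φ (x + y) = 0; rw [map_add, mul_add, hx, hy, add_zero]
    | zero => show d * φ 0 = 0; rw [map_zero, mul_zero]
    | mul x y _ _ hx _ => show d * φ (x * y) = 0; rw [map_mul, ← mul_assoc, hx, zero_mul]
    | smul r x _ hx => show d * φ (r • x) = 0; rw [map_smul, mul_smul_comm, hx, smul_zero]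
    | star x _ hx =>
      show d * φ (star x) = 0
      have : star x = x := by ext t; simp
      rw [this]; exact hx
  have hsub : (NonUnitalStarAlgebra.adjoin ℝ
      {(ContinuousMapZero.id (quasispectrum ℝ p) : C(quasispectrum ℝ p, ℝ)₀)} : Set _) ⊆
      {g | d * φ g = 0} := hmem
  have := hcl.closure_subset_iff.mpr hsub
  have := this (hdense.closure_eq ▸ Set.mem_univ g)
  exact this

/-- `cfc` version of the annihilation lemma. -/
lemma mul_cfc_eq_zero (d p : B) (hp : 0 ≤ p) (h : d * p = 0)
    (f : ℝ → ℝ) (hf : Continuous f) (hf0 : f 0 = 0) : d * cfc f p = 0 := by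
  have hpsa : IsSelfAdjoint p := .of_nonneg hp
  have hf' : ContinuousOn f (quasispectrum ℝ p) := hf.continuousOn
  rw [← cfcₙ_eq_cfc (a := p) hf' hf0, cfcₙ_apply f p hf' hf0 hpsa]
  exact mul_cfcₙHom_eq_zero d p hpsa h _

end Lemmas

section Conj
variable {B : Type*} [CStarAlgebra B] [PartialOrder B] [StarOrderedRing B]

/-- Conjugation lemma: if `0 ≤ p` and `w* w p = p` then `f(w p w*) = w f(p) w*`
for continuous `f` with `f 0 = 0`. -/
lemma conj_cfc (w p : B) (hp : 0 ≤ p) (hw : star w * w * p = p)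
    (f : ℝ → ℝ) (hf : Continuous f) (hf0 : f 0 = 0) :
    cfc f (w * p * star w) = w * cfc f p * star w := by
  have hpsa : IsSelfAdjoint p := IsSelfAdjoint.of_nonneg hp
  have hd : (star w * w - 1) * p = 0 := by rw [sub_mul, hw, one_mul, sub_self]
  -- annihilation facts
  have hl : ∀ g : C(quasispectrum ℝ p, ℝ)₀,
      star w * w * cfcₙHom hpsa g = cfcₙHom hpsa g := by
    intro g
    have := mul_cfcₙHom_eq_zero (star w * w - 1) p hpsa hd g
    rw [sub_mul, one_mul, sub_eq_zero] at this
    exact this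
  have hstarg : ∀ g : C(quasispectrum ℝ p, ℝ)₀, star g = g := fun g => by ext t; simp
  have hr : ∀ g : C(quasispectrum ℝ p, ℝ)₀,
      cfcₙHom hpsa g * (star w * w) = cfcₙHom hpsa g := by
    intro g
    have := congrArg star (hl g)
    simpa [star_mul, mul_assoc, ← map_star, hstarg g] using this
  -- positivity of the conjugate
  have hq : 0 ≤ w * p * star w := star_right_conjugate_nonneg hp w
  have hqsa : IsSelfAdjoint (w * p * star w) := IsSelfAdjoint.of_nonneg hq
  -- spectra
  have hsqrt : star w * w * CFC.sqrt p = CFC.sqrt p := by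
    have h0 := mul_cfcSqrt_eq_zero (star w * w - 1) p hp hd
    rw [sub_mul, one_mul, sub_eq_zero] at h0
    exact h0
  have hspec : quasispectrum ℝ (w * p * star w) ⊆ quasispectrum ℝ p := by
    have hs : CFC.sqrt p * CFC.sqrt p = p := CFC.sqrt_mul_sqrt_self p hp
    have hssa : IsSelfAdjoint (CFC.sqrt p) := IsSelfAdjoint.of_nonneg (CFC.sqrt_nonneg p)
    have key : w * p * star w = (w * CFC.sqrt p) * (CFC.sqrt p * star w) := by
      conv_lhs => rw [← hs]
      noncomm_ring
    have key2 : (CFC.sqrt p * star w) * (w * CFC.sqrt p) = p := by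
      calc CFC.sqrt p * star w * (w * CFC.sqrt p)
          = CFC.sqrt p * (star w * w * CFC.sqrt p) := by noncomm_ring
        _ = p := by rw [hsqrt, hs]
    rw [quasispectrum_eq_spectrum_union_zero, quasispectrum_eq_spectrum_union_zero, key]
    have := spectrum.nonzero_mul_comm (𝕜 := ℝ) (w * CFC.sqrt p) (CFC.sqrt p * star w)
    rw [key2] at this
    intro x hx
    rcases hx with hx | hx
    · rcases eq_or_ne x 0 with hx0 | hx0
      · exact Or.inr hx0
      · have hx' : x ∈ spectrum ℝ (w * CFC.sqrt p * (CFC.sqrt p * star w)) \ {0} := ⟨hx, hx0⟩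
        rw [this] at hx'
        exact Or.inl hx'.1
    · exact Or.inr hx
  -- the two homs
  set φ : C(quasispectrum ℝ p, ℝ)₀ →⋆ₙₐ[ℝ] B := cfcₙHom (R := ℝ) hpsa with hφ_def
  have hφc : Continuous φ := (cfcₙHom_isClosedEmbedding hpsa).continuous
  let Θ : C(quasispectrum ℝ p, ℝ)₀ →⋆ₙₐ[ℝ] B :=
    { toFun := fun g => w * φ g * star w
      map_zero' := by simp
      map_add' := fun g h => by simp only [map_add, mul_add, add_mul]
      map_smul' := fun r g => by simp only [map_smul, mul_smul_comm, smul_mul_assoc]; rfl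
      map_mul' := fun g h => by
        show w * φ (g * h) * star w = (w * φ g * star w) * (w * φ h * star w)
        rw [map_mul]
        calc w * (φ g * φ h) * star w
            = w * ((φ g * (star w * w)) * φ h) * star w := by rw [hr g]
          _ = (w * φ g * star w) * (w * φ h * star w) := by noncomm_ring
      map_star' := fun g => by
        show w * φ (star g) * star w = star (w * φ g * star w)
        rw [hstarg g, star_mul, star_mul, star_star, ← map_star, hstarg g, mul_assoc] }
  let ι : C(quasispectrum ℝ (w * p * star w), quasispectrum ℝ p)₀ :=
    ⟨⟨Set.inclusion hspec, continuous_id.subtype_map hspec⟩, rfl⟩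
  let Ψ : C(quasispectrum ℝ p, ℝ)₀ →⋆ₙₐ[ℝ] B :=
    (cfcₙHom hqsa).comp (ContinuousMapZero.nonUnitalStarAlgHom_precomp ℝ ι)
  have main : Θ = Ψ := by
    have inst1 : IsScalarTower ℝ B B := inferInstance
    have inst2 : SMulCommClass ℝ B B := inferInstance
    refine @ContinuousMapZero.UniqueHom.eq_of_continuous_of_map_id
      ℝ B _ _ _ _ _ _ _ _ _ inst1 inst2 _ (quasispectrum ℝ p) _ _ Θ Ψ ?_ ?_ ?_
    · show Continuous fun g => w * φ g * star w
      fun_prop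
    · show Continuous (Ψ : C(quasispectrum ℝ p, ℝ)₀ → B)
      refine (cfcₙHom_isClosedEmbedding hqsa).continuous.comp ?_
      exact ContinuousMapZero.continuous_comp_left ι
    · have h1 : Θ ⟨.restrict (quasispectrum ℝ p) (.id ℝ), rfl⟩ = w * p * star w := by
        show w * φ _ * star w = _
        exact congrArg (fun x => w * x * star w) (cfcₙHom_id (R := ℝ) hpsa)
      have h2 : Ψ ⟨.restrict (quasispectrum ℝ p) (.id ℝ), rfl⟩ = w * p * star w := by
        have h3 : ((ContinuousMapZero.nonUnitalStarAlgHom_precomp ℝ ι)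
            (⟨.restrict (quasispectrum ℝ p) (.id ℝ), rfl⟩ : C(quasispectrum ℝ p, ℝ)₀)) =
            ⟨.restrict (quasispectrum ℝ (w * p * star w)) (.id ℝ), rfl⟩ := by ext t; rfl
        calc Ψ ⟨.restrict (quasispectrum ℝ p) (.id ℝ), rfl⟩
            = cfcₙHom hqsa ((ContinuousMapZero.nonUnitalStarAlgHom_precomp ℝ ι)
              (⟨.restrict (quasispectrum ℝ p) (.id ℝ), rfl⟩ :
                C(quasispectrum ℝ p, ℝ)₀)) := rfl
          _ = w * p * star w := by rw [h3]; exact cfcₙHom_id hqsa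
      show Θ ⟨.restrict (quasispectrum ℝ p) (.id ℝ), rfl⟩ = Ψ ⟨.restrict (quasispectrum ℝ p) (.id ℝ), rfl⟩
      rw [h1, h2]
  -- evaluate at (the restriction of) f
  have hf' : ContinuousOn f (quasispectrum ℝ p) := hf.continuousOn
  have hfq : ContinuousOn f (quasispectrum ℝ (w * p * star w)) := hf.continuousOn
  rw [← cfcₙ_eq_cfc (a := w * p * star w) hfq hf0, ← cfcₙ_eq_cfc (a := p) hf' hf0,
    cfcₙ_apply f (w * p * star w) hfq hf0 hqsa, cfcₙ_apply f p hf' hf0 hpsa]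
  have := congrFun (congrArg DFunLike.coe main) ⟨⟨_, hf'.restrict⟩, hf0⟩
  have hΘ : Θ ⟨⟨_, hf'.restrict⟩, hf0⟩ = w * φ ⟨⟨_, hf'.restrict⟩, hf0⟩ * star w := rfl
  have hΨ : Ψ ⟨⟨_, hf'.restrict⟩, hf0⟩ = cfcₙHom hqsa ⟨⟨_, hfq.restrict⟩, hf0⟩ := by
    have h3 : ((ContinuousMapZero.nonUnitalStarAlgHom_precomp ℝ ι)
        (⟨⟨_, hf'.restrict⟩, hf0⟩ : C(quasispectrum ℝ p, ℝ)₀)) =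
        (⟨⟨_, hfq.restrict⟩, hf0⟩ : C(quasispectrum ℝ (w * p * star w), ℝ)₀) := by
      ext t; rfl
    calc Ψ ⟨⟨_, hf'.restrict⟩, hf0⟩
        = cfcₙHom hqsa ((ContinuousMapZero.nonUnitalStarAlgHom_precomp ℝ ι)
          (⟨⟨_, hf'.restrict⟩, hf0⟩ : C(quasispectrum ℝ p, ℝ)₀)) := rfl
      _ = cfcₙHom hqsa ⟨⟨_, hfq.restrict⟩, hf0⟩ := by rw [h3]
  rw [hΘ, hΨ] at this
  exact this.symm

end Conj

section CornerHom
variable {A B : Type*} [CStarAlgebra A] [CStarAlgebra B]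

/-- The upper-left corner embedding `A → M₂(A) ≃⋆ₐ B` as a non-unital star algebra hom. -/
noncomputable def cornerHom (Φ : Matrix (Fin 2) (Fin 2) A ≃⋆ₐ[ℂ] B) : A →⋆ₙₐ[ℂ] B where
  toFun x := Φ !![x, 0; 0, 0]
  map_smul' r x := by
    show Φ _ = r • Φ _
    rw [← map_smul]
    congr 1
    ext i j
    fin_cases i <;> fin_cases j <;> simp
  map_zero' := by
    show Φ _ = 0
    rw [show (!![(0 : A), 0; 0, 0] : Matrix (Fin 2) (Fin 2) A) = 0 by
      ext i j; fin_cases i <;> fin_cases j <;> simp, map_zero]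
  map_add' x y := by
    show Φ _ = Φ _ + Φ _
    rw [← map_add]
    congr 1
    ext i j
    fin_cases i <;> fin_cases j <;> simp
  map_mul' x y := by
    show Φ _ = Φ _ * Φ _
    rw [← map_mul]
    congr 1
    ext i j
    fin_cases i <;> fin_cases j <;>
      simp [Matrix.mul_apply, Fin.sum_univ_two]
  map_star' x := by
    show Φ _ = star (Φ _)
    rw [← map_star]
    congr 1
    ext i j
    fin_cases i <;> fin_cases j <;> simp [Matrix.conjTranspose_apply]

end CornerHom

/-- Let `A` be a unital C*-algebra and let `a, v ∈ A` satisfy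
`a = v·|a|` and `v* v·|a| = |a|` (polar decomposition). Then for every continuous
`f : ℝ → ℝ` with `f 0 = 0`, applying `f` via the continuous functional calculus to the
positive element `(1/2)·[[|a*|, a], [a*, |a|]]` of the C*-algebra `M₂(A)` yields
`f((1/2)·[[|a*|, a], [a*, |a|]]) = (1/2)·[[f(|a*|), f(|a*|) v], [v* f(|a*|), f(|a|)]]`.

Since Mathlib does not endow `Matrix (Fin 2) (Fin 2) A` with its (unique) C*-algebra
structure, we realize the C*-algebra `M₂(A)` as an arbitrary C*-algebra `B` that is
⋆-isomorphic to `Matrix (Fin 2) (Fin 2) A`, and apply the functional calculus there. -/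
theorem stmt6 {A B : Type*} [CStarAlgebra A] [PartialOrder A] [StarOrderedRing A]
    [CStarAlgebra B] [PartialOrder B] [StarOrderedRing B]
    (Φ : Matrix (Fin 2) (Fin 2) A ≃⋆ₐ[ℂ] B) (a v : A)
    (ha : a = v * CFC.sqrt (star a * a))
    (hv : star v * v * CFC.sqrt (star a * a) = CFC.sqrt (star a * a))
    (f : ℝ → ℝ) (hf : Continuous f) (hf0 : f 0 = 0) :
    cfc f (Φ ((1 / 2 : ℂ) •
        !![CFC.sqrt (a * star a), a; star a, CFC.sqrt (star a * a)]))
      = Φ ((1 / 2 : ℂ) •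
          !![cfc f (CFC.sqrt (a * star a)), cfc f (CFC.sqrt (a * star a)) * v;
             star v * cfc f (CFC.sqrt (a * star a)), cfc f (CFC.sqrt (star a * a))]) := by
  set p := CFC.sqrt (star a * a) with hp_def
  have hp : 0 ≤ p := CFC.sqrt_nonneg _
  have hpsa : IsSelfAdjoint p := .of_nonneg hp
  have hsa' : star a = p * star v := by
    conv_lhs => rw [ha]
    rw [star_mul, hpsa.star_eq]
  have hvp : 0 ≤ v * p * star v := star_right_conjugate_nonneg hp v
  have hsqrt2 : CFC.sqrt (a * star a) = v * p * star v := by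
    refine CFC.sqrt_unique ?_ hvp
    calc (v * p * star v) * (v * p * star v)
        = v * p * (star v * v * p) * star v := by noncomm_ring
      _ = v * (p * p) * star v := by rw [hv]; noncomm_ring
      _ = a * star a := by
          conv_rhs => rw [hsa', ha]
          noncomm_ring
  have hfabs : cfc f (v * p * star v) = v * cfc f p * star v := conj_cfc v p hp hv f hf hf0
  set q := cfc f p with hq_def
  have hqsa : IsSelfAdjoint q := cfc_predicate f p
  have hd : (star v * v - 1) * p = 0 := by rw [sub_mul, hv, one_mul, sub_self]
  have hvvq : star v * v * q = q := by
    have h0 := mul_cfc_eq_zero (star v * v - 1) p hp hd f hf hf0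
    rw [sub_mul, one_mul, sub_eq_zero] at h0
    exact h0
  have hqvv : q * (star v * v) = q := by
    have h0 := congrArg star hvvq
    rwa [star_mul, hqsa.star_eq, star_mul, star_star] at h0
  -- move to B
  set c : Matrix (Fin 2) (Fin 2) A := !![v, 0; 1, 0] with hc_def
  set D : Matrix (Fin 2) (Fin 2) A := !![p, 0; 0, 0] with hD_def
  set z : ℂ := (((Real.sqrt 2)⁻¹ : ℝ) : ℂ) with hz_def
  have hz2 : z * z = (1 / 2 : ℂ) := by
    rw [hz_def, ← Complex.ofReal_mul, ← mul_inv, Real.mul_self_sqrt (by norm_num)]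
    norm_num
  set w : B := z • Φ c with hw_def
  have hstarz : star z = z := by
    rw [hz_def, Complex.star_def, Complex.conj_ofReal]
  have hstarw : star w = z • Φ (star c) := by
    rw [hw_def, star_smul, hstarz, ← map_star]
  -- matrix identities
  have mat1 : star c * c * D = D + D := by
    rw [hc_def, hD_def]
    ext i j
    fin_cases i <;> fin_cases j <;>
      simp [Matrix.mul_apply, Fin.sum_univ_two, Matrix.conjTranspose_apply, add_mul, hv]
  have mat2 : c * D * star c = !![v * p * star v, v * p; p * star v, p] := by
    rw [hc_def, hD_def]
    ext i j
    fin_cases i <;> fin_cases j <;>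
      simp [Matrix.mul_apply, Fin.sum_univ_two, Matrix.conjTranspose_apply, mul_assoc]
  have mat3 : c * !![q, 0; 0, 0] * star c = !![v * q * star v, v * q; q * star v, q] := by
    rw [hc_def]
    ext i j
    fin_cases i <;> fin_cases j <;>
      simp [Matrix.mul_apply, Fin.sum_univ_two, Matrix.conjTranspose_apply, mul_assoc]
  have hs : CFC.sqrt p * CFC.sqrt p = p := CFC.sqrt_mul_sqrt_self p hp
  have hssa : IsSelfAdjoint (CFC.sqrt p) := .of_nonneg (CFC.sqrt_nonneg p)
  have matD : D = star (!![CFC.sqrt p, 0; 0, 0] : Matrix (Fin 2) (Fin 2) A) *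
      !![CFC.sqrt p, 0; 0, 0] := by
    rw [hD_def]
    ext i j
    fin_cases i <;> fin_cases j <;>
      simp [Matrix.mul_apply, Fin.sum_univ_two, Matrix.conjTranspose_apply, hssa.star_eq, hs]
  have hDpos : 0 ≤ Φ D := by
    rw [matD, map_mul, map_star]
    exact star_mul_self_nonneg _
  have h1 : star w * w * Φ D = Φ D := by
    rw [hstarw, hw_def, smul_mul_smul_comm, hz2, smul_mul_assoc, ← map_mul, ← map_mul, mat1,
      map_add]
    module
  have h2 : w * Φ D * star w = Φ ((1 / 2 : ℂ) • !![v * p * star v, v * p; p * star v, p]) := by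
    rw [hw_def, hstarw, smul_mul_assoc, smul_mul_smul_comm, hz2, ← map_mul, ← map_mul, mat2,
      map_smul]
  have h5 : w * Φ !![q, 0; 0, 0] * star w
      = Φ ((1 / 2 : ℂ) • !![v * q * star v, v * q; q * star v, q]) := by
    rw [hw_def, hstarw, smul_mul_assoc, smul_mul_smul_comm, hz2, ← map_mul, ← map_mul, mat3,
      map_smul]
  -- functional calculus commutes with the corner embedding
  set ψ : A →⋆ₙₐ[ℂ] B := cornerHom Φ with hψ_def
  have hψc : Continuous ψ := AddMonoidHomClass.continuous_of_bound ψ 1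
    (fun x => by simpa using NonUnitalStarAlgHom.norm_apply_le ψ x)
  have hψp : Φ D = ψ p := rfl
  have hΦDsa : IsSelfAdjoint (Φ D) := .of_nonneg hDpos
  have hψpsa : IsSelfAdjoint (ψ p) := hψp ▸ hΦDsa
  have h3 : cfc f (Φ D) = Φ !![q, 0; 0, 0] := by
    rw [← cfcₙ_eq_cfc (a := Φ D) hf.continuousOn hf0, hψp,
      ← NonUnitalStarAlgHomClass.map_cfcₙ ψ f p hf.continuousOn hf0 hψc hpsa hψpsa]
    have hcq : cfcₙ f p = q := cfcₙ_eq_cfc hf.continuousOn hf0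
    show Φ !![cfcₙ f p, 0; 0, 0] = Φ !![q, 0; 0, 0]
    rw [hcq]
  have h4 := conj_cfc w (Φ D) hDpos h1 f hf hf0
  -- final assembly
  have hmatch : (1 / 2 : ℂ) • !![CFC.sqrt (a * star a), a; star a, p]
      = (1 / 2 : ℂ) • !![v * p * star v, v * p; p * star v, p] := by
    rw [hsqrt2, hsa']
    conv_lhs => rw [ha]
  have hfinal : (1 / 2 : ℂ) •
      !![cfc f (CFC.sqrt (a * star a)), cfc f (CFC.sqrt (a * star a)) * v;
         star v * cfc f (CFC.sqrt (a * star a)), q]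
      = (1 / 2 : ℂ) • !![v * q * star v, v * q; q * star v, q] := by
    rw [hsqrt2, hfabs]
    have e1 : v * q * star v * v = v * q := by
      calc v * q * star v * v = v * (q * (star v * v)) := by noncomm_ring
        _ = v * q := by rw [hqvv]
    have e2 : star v * (v * q * star v) = q * star v := by
      calc star v * (v * q * star v) = (star v * v * q) * star v := by noncomm_ring
        _ = q * star v := by rw [hvvq]
    rw [e1, e2]
  rw [hmatch, ← h2, h4, h3, h5, hfinal]
end

section
/- Let n ∈ ℕ, let a be an n×n complex matrix, and let p ≥ 1 be a real number. Let M be the 2n×2n positive semidefinite block matrix fromBlocks(|a*|, a, aᴴ, |a|), where |a| = √(aᴴ a) and |a*| = √(a aᴴ). Then trace(f(M)) = 2^p · trace(f(|a|)), where f(t) = t^p (real power) is applied to the Hermitian matrices M and |a| via continuous functional calculus (equivalently, via the spectral decomposition). In particular (trace(f(M)))^{1/p} = 2 · (trace(f(|a|)))^{1/p}, i.e. the Schatten p-norm of M equals twice the Schatten p-norm of a. -/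
open Matrix Polynomial ComplexOrder



section stmt9helpers
variable {m : Type*} [Fintype m] [DecidableEq m]

lemma stmt9_interp (S : Set ℝ) (hS : S.Finite) (f : ℝ → ℝ) :
    ∃ q : ℝ[X], ∀ x ∈ S, q.eval x = f x := by
  refine ⟨Lagrange.interpolate hS.toFinset id f, fun x hx => ?_⟩
  simpa using Lagrange.eval_interpolate_at_node (r := f)
    (Set.injOn_id _) (hS.mem_toFinset.mpr hx)

lemma stmt9_cfc_eq_aeval {A : Matrix m m ℂ} (hA : IsSelfAdjoint A) (f : ℝ → ℝ) (q : ℝ[X])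
    (hq : ∀ x ∈ spectrum ℝ A, q.eval x = f x) :
    cfc f A = aeval A q := by
  rw [← cfc_polynomial q A hA]
  exact cfc_congr fun x hx => (hq x hx).symm

lemma stmt9_aeval_conj {A J : Matrix m m ℂ} (hJ : J * J = 1) (q : ℝ[X]) :
    aeval (J * A * J) q = J * aeval A q * J := by
  let c : Matrix m m ℂ →ₐ[ℝ] Matrix m m ℂ :=
  { toFun := fun X => J * X * J
    map_one' := by show J * 1 * J = 1; rw [mul_one, hJ]
    map_mul' := fun X Y => by
      show J * (X * Y) * J = (J * X * J) * (J * Y * J)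
      calc J * (X * Y) * J = J * X * (J * J) * Y * J := by rw [hJ]; noncomm_ring
        _ = (J * X * J) * (J * Y * J) := by noncomm_ring
    map_zero' := by simp
    map_add' := fun X Y => by
      show J * (X + Y) * J = J * X * J + J * Y * J
      noncomm_ring
    commutes' := fun r => by
      show J * algebraMap ℝ (Matrix m m ℂ) r * J = algebraMap ℝ (Matrix m m ℂ) r
      rw [← Algebra.commutes r J, mul_assoc, hJ, mul_one] }
  exact aeval_algHom_apply c A q

lemma stmt9_aeval_mul_swap (x y : Matrix m m ℂ) (q : ℝ[X]) :
    aeval (x * y) q * x = x * aeval (y * x) q := by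
  have hpow : ∀ k : ℕ, (x * y) ^ k * x = x * (y * x) ^ k := by
    intro k; induction k with
    | zero => simp
    | succ k ih =>
      calc (x * y) ^ (k + 1) * x = (x * y) ^ k * x * (y * x) := by
            rw [pow_succ]; noncomm_ring
        _ = x * (y * x) ^ k * (y * x) := by rw [ih]
        _ = x * (y * x) ^ (k + 1) := by rw [pow_succ]; noncomm_ring
  induction q using Polynomial.induction_on with
  | C r => simp [Algebra.commutes]
  | add q₁ q₂ h₁ h₂ => simp only [map_add, add_mul, mul_add, h₁, h₂]
  | monomial k r ih =>
    simp only [_root_.map_mul, aeval_C, map_pow, aeval_X]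
    rw [mul_assoc, hpow, ← mul_assoc, Algebra.commutes r x, mul_assoc]

variable {k l : Type*} [Fintype k] [DecidableEq k] [Fintype l] [DecidableEq l]

noncomputable def stmt9_blockDiag (k l : Type*) [Fintype k] [DecidableEq k] [Fintype l]
    [DecidableEq l] : (Matrix k k ℂ × Matrix l l ℂ) →ₐ[ℝ] Matrix (k ⊕ l) (k ⊕ l) ℂ where
  toFun P := fromBlocks P.1 0 0 P.2
  map_one' := fromBlocks_one
  map_mul' P Q := by
    show fromBlocks (P.1 * Q.1) 0 0 (P.2 * Q.2) = _
    simp [fromBlocks_multiply]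
  map_zero' := by
    show fromBlocks 0 0 0 0 = 0
    simp [fromBlocks_zero]
  map_add' P Q := by
    show fromBlocks (P.1 + Q.1) 0 0 (P.2 + Q.2) = _
    simp [fromBlocks_add]
  commutes' r := by
    show fromBlocks (algebraMap ℝ (Matrix k k ℂ) r) 0 0 (algebraMap ℝ (Matrix l l ℂ) r)
      = algebraMap ℝ (Matrix (k ⊕ l) (k ⊕ l) ℂ) r
    simp only [Algebra.algebraMap_eq_smul_one, ← fromBlocks_one]
    rw [fromBlocks_smul]
    simp

lemma stmt9_aeval_fromBlocks (X : Matrix k k ℂ) (Y : Matrix l l ℂ) (q : ℝ[X]) :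
    aeval (fromBlocks X 0 0 Y) q = fromBlocks (aeval X q) 0 0 (aeval Y q) := by
  have h := aeval_algHom_apply (stmt9_blockDiag k l) (X, Y) q
  have h1 := aeval_algHom_apply (AlgHom.fst ℝ (Matrix k k ℂ) (Matrix l l ℂ)) (X, Y) q
  have h2 := aeval_algHom_apply (AlgHom.snd ℝ (Matrix k k ℂ) (Matrix l l ℂ)) (X, Y) q
  have hprod : aeval ((X, Y) : Matrix k k ℂ × Matrix l l ℂ) q = (aeval X q, aeval Y q) := by
    ext1
    · exact h1.symm
    · exact h2.symm
  rw [hprod] at h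
  exact h

set_option linter.unusedSectionVars false in
lemma stmt9_trace_fromBlocks (A : Matrix k k ℂ) (B : Matrix k l ℂ) (C : Matrix l k ℂ)
    (D : Matrix l l ℂ) : (fromBlocks A B C D).trace = A.trace + D.trace := by
  simp [Matrix.trace, Fintype.sum_sum_type, Matrix.diag]

lemma stmt9_cfc_posSemidef {A : Matrix m m ℂ} (hA : A.IsHermitian) (f : ℝ → ℝ)
    (hf : ∀ x, 0 ≤ f x) : (cfc f A).PosSemidef := by
  rw [hA.cfc_eq]
  unfold Matrix.IsHermitian.cfc
  rw [Unitary.conjStarAlgAut_apply, Matrix.star_eq_conjTranspose]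
  exact (posSemidef_diagonal_iff.mpr fun i =>
    RCLike.ofReal_nonneg.mpr (hf _)).mul_mul_conjTranspose_same _

lemma stmt9_spectrum_nonneg {A : Matrix m m ℂ} (hA : A.PosSemidef) :
    ∀ x ∈ spectrum ℝ A, 0 ≤ x := by
  intro x hx
  rw [hA.1.spectrum_real_eq_range_eigenvalues] at hx
  obtain ⟨i, rfl⟩ := hx
  exact hA.eigenvalues_nonneg i

lemma stmt9_cfc_sqrt_eq {A : Matrix m m ℂ} (hA : A.PosSemidef) :
    cfc Real.sqrt A = cfc Real.sqrt A := rfl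

lemma stmt9_trace_cfc {A : Matrix m m ℂ} (hA : A.IsHermitian) (f : ℝ → ℝ) :
    (cfc f A).trace = ((∑ i, f (hA.eigenvalues i) : ℝ) : ℂ) := by
  rw [hA.cfc_eq]
  unfold Matrix.IsHermitian.cfc
  rw [Unitary.conjStarAlgAut_apply, trace_mul_cycle, Unitary.star_mul_self_of_mem (SetLike.coe_mem hA.eigenvectorUnitary),
    one_mul, trace_diagonal]
  push_cast
  rfl

lemma stmt9_hid (p : ℝ) (hp0 : p ≠ 0) (x : ℝ) :
    (|x| + x) ^ p + (|-x| + -x) ^ p = (2 : ℝ) ^ p * Real.sqrt (x ^ 2) ^ p := by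
  rw [Real.sqrt_sq_eq_abs, abs_neg]
  rcases le_total 0 x with hx | hx
  · rw [abs_of_nonneg hx]
    have h2 : x + -x = 0 := by ring
    have h1 : x + x = 2 * x := by ring
    rw [h1, h2, Real.zero_rpow hp0, add_zero, Real.mul_rpow (by norm_num) hx]
  · rw [abs_of_nonpos hx]
    have h1 : -x + x = 0 := by ring
    have h2 : -x + -x = 2 * -x := by ring
    rw [h1, h2, Real.zero_rpow hp0, zero_add,
      Real.mul_rpow (by norm_num) (by linarith)]

end stmt9helpers

open Matrix ComplexOrder in
/-- Let `a` be an `n × n` complex matrix and `p ≥ 1` a real number.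
Let `M` be the `2n × 2n` (positive semidefinite) block matrix
`fromBlocks |a*| a aᴴ |a|`, where `|a| = √(aᴴ a)` and `|a*| = √(a aᴴ)`. Then, with
`f t = t ^ p` applied to the Hermitian matrices `M` and `|a|` by the continuous
functional calculus, `trace (f M) = 2^p · trace (f |a|)`; in particular
`(trace (f M))^(1/p) = 2 · (trace (f |a|))^(1/p)`, i.e. the Schatten `p`-norm of `M`
is twice the Schatten `p`-norm of `a`. -/
theorem stmt9 (n : ℕ) (a : Matrix (Fin n) (Fin n) ℂ) (p : ℝ) (hp : 1 ≤ p) :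
    (cfc (fun t : ℝ => t ^ p)
        (fromBlocks (cfc Real.sqrt (a * aᴴ)) a
          aᴴ (cfc Real.sqrt (aᴴ * a)))).trace
      = (((2 : ℝ) ^ p : ℝ) : ℂ) *
          (cfc (fun t : ℝ => t ^ p) (cfc Real.sqrt (aᴴ * a))).trace ∧
    (cfc (fun t : ℝ => t ^ p)
        (fromBlocks (cfc Real.sqrt (a * aᴴ)) a
          aᴴ (cfc Real.sqrt (aᴴ * a)))).trace.re ^ (1 / p)
      = 2 * (cfc (fun t : ℝ => t ^ p)
            (cfc Real.sqrt (aᴴ * a))).trace.re ^ (1 / p) := by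
  have hp0 : p ≠ 0 := by intro h; rw [h] at hp; linarith
  have haaH : (a * aᴴ).PosSemidef := posSemidef_self_mul_conjTranspose a
  have haHa : (aᴴ * a).PosSemidef := posSemidef_conjTranspose_mul_self a
  set f : ℝ → ℝ := fun t : ℝ => t ^ p with hfdef
  set g : ℝ → ℝ := fun y : ℝ => Real.sqrt y ^ p with hgdef
  set h : ℝ → ℝ := fun x : ℝ => (|x| + x) ^ p with hhdef
  set t0 : Matrix (Fin n) (Fin n) ℂ := cfc Real.sqrt (a * aᴴ) with ht0def
  set s0 : Matrix (Fin n) (Fin n) ℂ := cfc Real.sqrt (aᴴ * a) with hs0def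
  set N : Matrix (Fin n ⊕ Fin n) (Fin n ⊕ Fin n) ℂ := fromBlocks 0 a aᴴ 0 with hNdef
  have hNsa : IsSelfAdjoint N := by
    show star N = N
    rw [Matrix.star_eq_conjTranspose, hNdef]
    simp [fromBlocks_conjTranspose]
  have hN2 : N ^ 2 = fromBlocks (a * aᴴ) 0 0 (aᴴ * a) := by
    rw [pow_two, hNdef]
    simp [fromBlocks_multiply]
  have hN2sa : IsSelfAdjoint (fromBlocks (a * aᴴ) 0 0 (aᴴ * a)) := hN2 ▸ hNsa.pow 2
  have haaHsa : IsSelfAdjoint (a * aᴴ) := haaH.1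
  have haHasa : IsSelfAdjoint (aᴴ * a) := haHa.1
  have ht0 : cfc Real.sqrt (a * aᴴ) = t0 := stmt9_cfc_sqrt_eq haaH
  have hs0 : cfc Real.sqrt (aᴴ * a) = s0 := stmt9_cfc_sqrt_eq haHa
  -- square root of the block diagonal matrix
  have hsqrtblock : cfc Real.sqrt (fromBlocks (a * aᴴ) 0 0 (aᴴ * a)) = fromBlocks t0 0 0 s0 := by
    obtain ⟨q, hq⟩ := stmt9_interp
      (spectrum ℝ (fromBlocks (a * aᴴ) 0 0 (aᴴ * a)) ∪ spectrum ℝ (a * aᴴ) ∪ spectrum ℝ (aᴴ * a))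
      (((Matrix.finite_real_spectrum).union Matrix.finite_real_spectrum).union
        Matrix.finite_real_spectrum) Real.sqrt
    rw [stmt9_cfc_eq_aeval hN2sa _ q (fun x hx => hq x (Or.inl (Or.inl hx))),
      stmt9_aeval_fromBlocks,
      ← stmt9_cfc_eq_aeval haaHsa _ q (fun x hx => hq x (Or.inl (Or.inr hx))),
      ← stmt9_cfc_eq_aeval haHasa _ q (fun x hx => hq x (Or.inr hx)), ht0, hs0]
  -- |N| is the block diagonal matrix
  have habs : cfc (fun x : ℝ => |x|) N = fromBlocks t0 0 0 s0 := by
    have e1 : cfc (fun x : ℝ => |x|) N = cfc (fun x : ℝ => Real.sqrt (x ^ 2)) N :=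
      cfc_congr fun x _ => (Real.sqrt_sq_eq_abs x).symm
    have e2 : cfc (fun x : ℝ => Real.sqrt (x ^ 2)) N = cfc Real.sqrt (N ^ 2) :=
      cfc_comp_pow Real.sqrt 2 N
        ((Matrix.finite_real_spectrum.image _).continuousOn _) hNsa
    rw [e1, e2, hN2, hsqrtblock]
  -- M = |N| + N
  have hM : fromBlocks t0 a aᴴ s0 = cfc (fun x : ℝ => |x| + x) N := by
    have eadd : cfc (fun x : ℝ => |x| + x) N
        = cfc (fun x : ℝ => |x|) N + cfc (fun x : ℝ => x) N :=
      cfc_add N (fun x : ℝ => |x|) (fun x : ℝ => x)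
        ((Matrix.finite_real_spectrum).continuousOn _)
        ((Matrix.finite_real_spectrum).continuousOn _)
    rw [eadd, cfc_id' ℝ N hNsa, habs, hNdef]
    simp [fromBlocks_add]
  -- f(M) = h(N)
  have hMcfc : cfc f (fromBlocks t0 a aᴴ s0) = cfc h N := by
    rw [hM]
    exact (cfc_comp' f (fun x : ℝ => |x| + x) N
      ((Matrix.finite_real_spectrum.image _).continuousOn _)
      ((Matrix.finite_real_spectrum).continuousOn _) hNsa).symm
  -- symmetry of the spectrum of N
  have hsym : (cfc h N).trace = (cfc (fun x : ℝ => h (-x)) N).trace := by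
    set J : Matrix (Fin n ⊕ Fin n) (Fin n ⊕ Fin n) ℂ :=
      fromBlocks 1 0 0 (-1) with hJdef
    have hJ2 : J * J = 1 := by
      rw [hJdef]
      simp [fromBlocks_multiply, fromBlocks_one]
    have hJNJ : J * N * J = -N := by
      rw [hJdef, hNdef]
      simp [fromBlocks_multiply, fromBlocks_neg]
    have hnegsa : IsSelfAdjoint (-N) := hNsa.neg
    obtain ⟨q, hq⟩ := stmt9_interp (spectrum ℝ N ∪ spectrum ℝ (-N))
      ((Matrix.finite_real_spectrum).union Matrix.finite_real_spectrum) h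
    have e3 : cfc (fun x : ℝ => h (-x)) N = cfc h (-N) :=
      cfc_comp_neg (f := h) (a := N)
        ((Matrix.finite_real_spectrum.image _).continuousOn _) hNsa
    have e4 : cfc h (-N) = aeval (-N) q :=
      stmt9_cfc_eq_aeval hnegsa h q (fun x hx => hq x (Or.inr hx))
    have e5 : cfc h N = aeval N q :=
      stmt9_cfc_eq_aeval hNsa h q (fun x hx => hq x (Or.inl hx))
    rw [e3, e4, e5, ← hJNJ, stmt9_aeval_conj hJ2, trace_mul_cycle, hJ2, one_mul]
  -- reduce g on a*aᴴ and aᴴ*a to f on the square roots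
  have hgt : cfc g (a * aᴴ) = cfc f t0 := by
    rw [← ht0]
    exact cfc_comp' f Real.sqrt (a * aᴴ)
      ((Matrix.finite_real_spectrum.image _).continuousOn _)
      ((Matrix.finite_real_spectrum).continuousOn _) haaHsa
  have hgs : cfc g (aᴴ * a) = cfc f s0 := by
    rw [← hs0]
    exact cfc_comp' f Real.sqrt (aᴴ * a)
      ((Matrix.finite_real_spectrum.image _).continuousOn _)
      ((Matrix.finite_real_spectrum).continuousOn _) haHasa
  -- trace of g over a*aᴴ equals trace of g over aᴴ*a
  have hker : (cfc g (a * aᴴ)).trace = (cfc g (aᴴ * a)).trace := by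
    obtain ⟨q, hq⟩ := stmt9_interp
      (spectrum ℝ (a * aᴴ) ∪ spectrum ℝ (aᴴ * a) ∪ {0})
      (((Matrix.finite_real_spectrum).union Matrix.finite_real_spectrum).union
        (Set.finite_singleton 0)) g
    have hq0 : q.coeff 0 = 0 := by
      rw [Polynomial.coeff_zero_eq_eval_zero, hq 0 (Or.inr rfl), hgdef]
      show Real.sqrt 0 ^ p = 0
      rw [Real.sqrt_zero, Real.zero_rpow hp0]
    have hqfact : Polynomial.X * q.divX = q := by
      conv_rhs => rw [← Polynomial.X_mul_divX_add q]
      rw [hq0, map_zero, add_zero]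
    have efac1 : aeval (a * aᴴ) q = (a * aᴴ) * aeval (a * aᴴ) q.divX := by
      conv_lhs => rw [← hqfact]
      rw [_root_.map_mul, aeval_X]
    have efac2 : aeval (aᴴ * a) q = (aᴴ * a) * aeval (aᴴ * a) q.divX := by
      conv_lhs => rw [← hqfact]
      rw [_root_.map_mul, aeval_X]
    calc (cfc g (a * aᴴ)).trace
        = (aeval (a * aᴴ) q).trace := by
          rw [stmt9_cfc_eq_aeval haaHsa g q (fun x hx => hq x (Or.inl (Or.inl hx)))]
      _ = ((a * aᴴ) * aeval (a * aᴴ) q.divX).trace := by rw [efac1]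
      _ = ((aeval (a * aᴴ) q.divX * a) * aᴴ).trace := by
          rw [trace_mul_comm, ← mul_assoc]
      _ = ((a * aeval (aᴴ * a) q.divX) * aᴴ).trace := by
          rw [stmt9_aeval_mul_swap]
      _ = ((aᴴ * a) * aeval (aᴴ * a) q.divX).trace := by
          rw [trace_mul_comm, ← mul_assoc]
      _ = (aeval (aᴴ * a) q).trace := by rw [efac2]
      _ = (cfc g (aᴴ * a)).trace := by
          rw [← stmt9_cfc_eq_aeval haHasa g q (fun x hx => hq x (Or.inl (Or.inr hx)))]
  -- trace of g over the block diagonal splits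
  have hblock : (cfc g (fromBlocks (a * aᴴ) 0 0 (aᴴ * a))).trace
      = (cfc g (a * aᴴ)).trace + (cfc g (aᴴ * a)).trace := by
    obtain ⟨q, hq⟩ := stmt9_interp
      (spectrum ℝ (fromBlocks (a * aᴴ) 0 0 (aᴴ * a)) ∪ spectrum ℝ (a * aᴴ) ∪ spectrum ℝ (aᴴ * a))
      (((Matrix.finite_real_spectrum).union Matrix.finite_real_spectrum).union
        Matrix.finite_real_spectrum) g
    rw [stmt9_cfc_eq_aeval hN2sa g q (fun x hx => hq x (Or.inl (Or.inl hx))),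
      stmt9_aeval_fromBlocks, stmt9_trace_fromBlocks,
      ← stmt9_cfc_eq_aeval haaHsa g q (fun x hx => hq x (Or.inl (Or.inr hx))),
      ← stmt9_cfc_eq_aeval haHasa g q (fun x hx => hq x (Or.inr hx))]
  -- the key identity
  have key : (2 : ℂ) * (cfc h N).trace
      = (((2 : ℝ) ^ p : ℝ) : ℂ) * ((cfc f s0).trace + (cfc f s0).trace) := by
    have eadd : cfc (fun x : ℝ => h x + h (-x)) N
        = cfc h N + cfc (fun x : ℝ => h (-x)) N :=
      cfc_add N h (fun x : ℝ => h (-x))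
        ((Matrix.finite_real_spectrum).continuousOn _)
        ((Matrix.finite_real_spectrum).continuousOn _)
    have hfun : (fun x : ℝ => h x + h (-x))
        = (fun x : ℝ => (2 : ℝ) ^ p * (Real.sqrt (x ^ 2) ^ p)) :=
      funext fun x => stmt9_hid p hp0 x
    have emul : cfc (fun x : ℝ => (2 : ℝ) ^ p * (Real.sqrt (x ^ 2) ^ p)) N
        = ((2 : ℝ) ^ p) • cfc (fun x : ℝ => Real.sqrt (x ^ 2) ^ p) N :=
      cfc_const_mul ((2 : ℝ) ^ p) (fun x : ℝ => Real.sqrt (x ^ 2) ^ p) N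
        ((Matrix.finite_real_spectrum).continuousOn _)
    have ecomp : cfc (fun x : ℝ => Real.sqrt (x ^ 2) ^ p) N = cfc g (N ^ 2) :=
      cfc_comp_pow g 2 N
        ((Matrix.finite_real_spectrum.image _).continuousOn _) hNsa
    calc (2 : ℂ) * (cfc h N).trace
        = (cfc h N).trace + (cfc (fun x : ℝ => h (-x)) N).trace := by
          rw [← hsym]; ring
      _ = (cfc h N + cfc (fun x : ℝ => h (-x)) N).trace := (trace_add _ _).symm
      _ = (cfc (fun x : ℝ => h x + h (-x)) N).trace := by rw [eadd]
      _ = (((2 : ℝ) ^ p) • cfc (fun x : ℝ => Real.sqrt (x ^ 2) ^ p) N).trace := by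
          rw [hfun, emul]
      _ = (((2 : ℝ) ^ p : ℝ) : ℂ) * (cfc (fun x : ℝ => Real.sqrt (x ^ 2) ^ p) N).trace := by
          rw [trace_smul, Complex.real_smul]
      _ = (((2 : ℝ) ^ p : ℝ) : ℂ) * ((cfc f s0).trace + (cfc f s0).trace) := by
          rw [ecomp, hN2, hblock, hker, hgs]
  have part1 : (cfc f (fromBlocks t0 a aᴴ s0)).trace
      = (((2 : ℝ) ^ p : ℝ) : ℂ) * (cfc f s0).trace := by
    rw [hMcfc]
    apply mul_left_cancel₀ (two_ne_zero (α := ℂ))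
    rw [key]; ring
  refine ⟨part1, ?_⟩
  have hs0psd : s0.PosSemidef := stmt9_cfc_posSemidef haHa.1 _ fun x => Real.sqrt_nonneg x
  have hS : (cfc f s0).trace = ((∑ i, f (hs0psd.1.eigenvalues i) : ℝ) : ℂ) :=
    stmt9_trace_cfc hs0psd.1 f
  have hSre : 0 ≤ (cfc f s0).trace.re := by
    rw [hS, Complex.ofReal_re]
    exact Finset.sum_nonneg fun i _ =>
      Real.rpow_nonneg (hs0psd.eigenvalues_nonneg i) p
  have h2p : ((2 : ℝ) ^ p) ^ (1 / p) = 2 := by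
    rw [← Real.rpow_mul (by norm_num : (0 : ℝ) ≤ 2), mul_one_div_cancel hp0, Real.rpow_one]
  rw [part1, Complex.re_ofReal_mul,
    Real.mul_rpow (Real.rpow_nonneg (by norm_num) p) hSre, h2p]
end

section
/- Let A be a unital C*-algebra and let v ∈ A satisfy v v* v = v. For x ∈ A define Φ(x) = (1/2) · [[v x v*, v x], [x v*, v* v x]] ∈ M₂(A). Then for all e, f ∈ A that commute with v* v, one has Φ(e) · Φ(f) = Φ(e f). -/
/-- The map `x ↦ (1/2) · [[v x v*, v x], [x v*, v* v x]] : A → M₂(A)`. -/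
noncomputable def stmt10Phi {A : Type*} [CStarAlgebra A] (v x : A) :
    Matrix (Fin 2) (Fin 2) A :=
  (1 / 2 : ℝ) • !![v * x * star v, v * x; x * star v, star v * v * x]

/-- Let `A` be a unital C*-algebra and let `v ∈ A` be a partial
isometry, i.e. `v v* v = v`. For `x ∈ A` set
`Φ(x) = (1/2) · [[v x v*, v x], [x v*, v* v x]] ∈ M₂(A)`. Then for all `e, f ∈ A`
commuting with `v* v`, one has `Φ(e) · Φ(f) = Φ(e f)`. -/
theorem stmt10 {A : Type*} [CStarAlgebra A] (v : A) (hv : v * star v * v = v)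
    (e f : A) (he : Commute e (star v * v)) (hf : Commute f (star v * v)) :
    stmt10Phi v e * stmt10Phi v f = stmt10Phi v (e * f) := by
  have hv' : star v * (v * star v) = star v := by
    have := congrArg star hv
    simpa [star_mul, star_star, mul_assoc] using this
  have hvap : ∀ z : A, v * (star v * (v * z)) = v * z := by
    intro z
    calc v * (star v * (v * z)) = (v * star v * v) * z := by simp only [mul_assoc]
    _ = v * z := by rw [hv]
  have hvv : ∀ z : A, star v * (v * (star v * (v * z))) = star v * (v * z) := by
    intro z
    calc star v * (v * (star v * (v * z))) = (star v * (v * star v)) * (v * z) := by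
          simp only [mul_assoc]
    _ = star v * (v * z) := by rw [hv']
  have hep : ∀ z : A, star v * (v * (e * z)) = e * (star v * (v * z)) := by
    intro z
    calc star v * (v * (e * z)) = ((star v * v) * e) * z := by simp only [mul_assoc]
    _ = (e * (star v * v)) * z := by rw [← he.eq]
    _ = e * (star v * (v * z)) := by simp only [mul_assoc]
  have hfp : ∀ z : A, star v * (v * (f * z)) = f * (star v * (v * z)) := by
    intro z
    calc star v * (v * (f * z)) = ((star v * v) * f) * z := by simp only [mul_assoc]
    _ = (f * (star v * v)) * z := by rw [← hf.eq]
    _ = f * (star v * (v * z)) := by simp only [mul_assoc]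
  have h00 : (v * e * star v) * (v * f * star v) + (v * e) * (f * star v) =
      v * (e * f) * star v + v * (e * f) * star v := by
    have h1 : (v * e * star v) * (v * f * star v) = v * (e * f) * star v := by
      simp only [mul_assoc]; rw [hfp (star v), hv']
    have h2 : (v * e) * (f * star v) = v * (e * f) * star v := by
      simp only [mul_assoc]
    rw [h1, h2]
  have h01 : (v * e * star v) * (v * f) + (v * e) * (star v * v * f) =
      v * (e * f) + v * (e * f) := by
    have h1 : (v * e * star v) * (v * f) = v * (e * f) := by
      simp only [mul_assoc]; rw [← hep f, hvap]
    have h2 : (v * e) * (star v * v * f) = v * (e * f) := by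
      simp only [mul_assoc]; rw [← hep f, hvap]
    rw [h1, h2]
  have h10 : (e * star v) * (v * f * star v) + (star v * v * e) * (f * star v) =
      (e * f) * star v + (e * f) * star v := by
    have h1 : (e * star v) * (v * f * star v) = (e * f) * star v := by
      simp only [mul_assoc]; rw [hfp (star v), hv', ← mul_assoc]
    have h2 : (star v * v * e) * (f * star v) = (e * f) * star v := by
      simp only [mul_assoc]; rw [hep (f * star v), hfp (star v), hv', ← mul_assoc]
    rw [h1, h2]
  have h11 : (e * star v) * (v * f) + (star v * v * e) * (star v * v * f) =
      star v * v * (e * f) + star v * v * (e * f) := by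
    have h1 : (e * star v) * (v * f) = star v * v * (e * f) := by
      simp only [mul_assoc]; rw [← hep f]
    have h2 : (star v * v * e) * (star v * v * f) = star v * v * (e * f) := by
      simp only [mul_assoc]; rw [hep (star v * (v * f)), hvv, ← hep]
    rw [h1, h2]
  unfold stmt10Phi
  rw [Matrix.smul_mul, Matrix.mul_smul, smul_smul, Matrix.mul_fin_two]
  rw [h00, h01, h10, h11]
  ext i j
  fin_cases i <;> fin_cases j <;>
    simp [Matrix.smul_apply, ← two_smul ℝ, smul_smul]
end

section
/- Let A be a unital C*-algebra, let a, v ∈ A satisfy a = v · |a| and v* v · |a| = |a|, and let e ∈ A be a projection (e = e* = e²) commuting with a* a. Then a e v* is a positive element of A and a e v* = √(a e a*); in other words, a e v* = |(a e)*|. -/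
open scoped NNReal

/-- If `e` commutes with a selfadjoint element `b`, it commutes with `cfc f b` for any
`f : ℝ → ℝ`, by Stone–Weierstrass approximation by polynomials. -/
lemma commute_cfc_real' {A : Type*} [CStarAlgebra A] {e b : A} (hb : IsSelfAdjoint b)
    (h : Commute e b) (f : ℝ → ℝ) : Commute e (cfc f b) := by
  refine cfc_cases (fun x ↦ Commute e x) b f (Commute.zero_right e) fun hf hb' ↦ ?_
  suffices H : ∀ g : C(spectrum ℝ b, ℝ), Commute e (cfcHom hb' g) from H _
  intro g
  have hcont : Continuous (cfcHom hb' (R := ℝ)) := (cfcHom_isClosedEmbedding hb').continuous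
  induction g using ContinuousMap.induction_on_of_compact with
  | const r =>
    have h1 : (ContinuousMap.const (spectrum ℝ b) r) = algebraMap ℝ C(spectrum ℝ b, ℝ) r := rfl
    rw [h1, AlgHomClass.commutes]
    exact Algebra.commute_algebraMap_right r e
  | id => rw [cfcHom_id hb']; exact h
  | star_id => rw [star_trivial, cfcHom_id hb']; exact h
  | add f g hf hg => rw [map_add]; exact hf.add_right hg
  | mul f g hf hg => rw [map_mul]; exact hf.mul_right hg
  | frequently f hf =>
    have hc : IsClosed {g : C(spectrum ℝ b, ℝ) | e * cfcHom hb' g = cfcHom hb' g * e} :=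
      isClosed_eq (continuous_const.mul hcont) (hcont.mul continuous_const)
    exact hc.closure_subset (mem_closure_iff_frequently.mpr hf)

/-- Let `A` be a unital C*-algebra, let `a, v ∈ A` satisfy
`a = v·|a|` and `v* v·|a| = |a|` (polar decomposition), and let `e ∈ A` be a projection
(`e = e*`, `e = e²`) commuting with `a* a`. Then `a e v*` is a positive element of `A`
and `a e v* = √(a e a*)`, i.e. `a e v* = |(a e)*|`. -/
theorem stmt12 {A : Type*} [CStarAlgebra A] [PartialOrder A] [StarOrderedRing A]
    (a v e : A) (ha : a = v * CFC.sqrt (star a * a))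
    (hv : star v * v * CFC.sqrt (star a * a) = CFC.sqrt (star a * a))
    (he : IsSelfAdjoint e) (he2 : IsIdempotentElem e)
    (hcomm : Commute e (star a * a)) :
    0 ≤ a * e * star v ∧ a * e * star v = CFC.sqrt (a * e * star a) := by
  set s := CFC.sqrt (star a * a) with hs_def
  have hb : (0 : A) ≤ star a * a := star_mul_self_nonneg a
  have hs0 : (0 : A) ≤ s := CFC.sqrt_nonneg _
  have hsa : IsSelfAdjoint s := .of_nonneg hs0
  -- e commutes with s
  have hes : Commute e s := by
    rw [hs_def, CFC.sqrt_eq_cfc, cfc_nnreal_eq_real _ _ hb]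
    exact commute_cfc_real' (.of_nonneg hb) hcomm _
  have hes' : ∀ x : A, e * (s * x) = s * (e * x) := fun x => by
    rw [← mul_assoc, hes.eq, mul_assoc]
  have he2' : ∀ x : A, e * (e * x) = e * x := fun x => by
    rw [← mul_assoc, he2]
  have hv' : ∀ x : A, star v * (v * (s * x)) = s * x := fun x => by
    rw [← mul_assoc, ← mul_assoc, hv]
  -- positivity
  have h2 : (0 : A) ≤ s * e := by
    have h3 := star_left_conjugate_nonneg hs0 e
    rw [he.star_eq] at h3
    rwa [hes.eq, mul_assoc, he2] at h3
  have hpos : (0 : A) ≤ a * e * star v := by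
    have h4 := star_right_conjugate_nonneg h2 v
    have h5 : v * (s * e) * star v = a * e * star v := by
      rw [ha]; simp only [mul_assoc]
    rwa [h5] at h4
  refine ⟨hpos, ?_⟩
  -- the square identity
  have hsq : (a * e * star v) * (a * e * star v) = a * e * star a := by
    rw [ha, star_mul, hsa.star_eq]
    simp only [mul_assoc]
    rw [hv' (e * star v), hes' (e * star v), he2' (star v), hes' (star v)]
  exact (CFC.sqrt_unique hsq hpos).symm
end
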